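/- Let φ = (√5 − 1)/2. For every real p with φ ≤ p < 1 and every integer n ≥ 2, one has v_{n-1}(p) + 1 ≤ v_n(p) < n − ((1−p)/p)^{n+1}, and the lower inequality is strict unless n = 2 and p = φ. -/

import Mathlib

/-- `v p n` is the optimal expected number of heads in the coin game with `n` coins,
each landing heads with probability `p`. -/
noncomputable def v (p : ℝ) : ℕ → ℝ
  | 0 => 0
  | n + 1 =>
      ((n : ℝ) + 1) * p ^ (n + 1) + v p n * (1 - p) ^ (n + 1) +
        ∑ j ∈ (Finset.Icc 1 n).attach,
          (((n + 1).choose j.1 : ℕ) : ℝ) * p ^ (j.1 : ℕ) * (1 - p) ^ (n + 1 - j.1) *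
            ((Finset.Icc 1 j.1).attach.sup'
              (Finset.attach_nonempty_iff.mpr
                (Finset.nonempty_Icc.mpr (Finset.mem_Icc.mp j.2).1))
              (fun i => v p (n + 1 - i.1) + (i.1 : ℝ)))
decreasing_by
  · omega
  · have h := (Finset.mem_Icc.mp i.2).1
    omega

/-- `s p n = v p n - n + 1 - p`. -/
noncomputable def s (p : ℝ) (n : ℕ) : ℝ := v p n - n + 1 - p

lemma v_one' (p : ℝ) : v p 1 = p := by
  rw [v]
  rw [Finset.sum_eq_zero (fun j _ => absurd (Finset.mem_Icc.mp j.2) (by omega))]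
  norm_num [v]

lemma v_chain' (p : ℝ) (n : ℕ) (H : ∀ m, 2 ≤ m → m ≤ n → v p (m-1) + 1 ≤ v p m) :
    ∀ d k, 1 ≤ k → k + d ≤ n → v p k + (d : ℝ) ≤ v p (k + d) := by
  intro d
  induction d with
  | zero => intro k hk hkn; simp
  | succ d ih =>
    intro k hk hkn
    have h1 := ih k hk (by omega)
    have h2 := H (k + d + 1) (by omega) (by omega)
    have e : k + d + 1 - 1 = k + d := by omega
    rw [e] at h2
    have e2 : k + (d + 1) = (k + d) + 1 := by omega
    rw [e2]
    push_cast
    linarith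

lemma v_sum_binom' (p : ℝ) (n : ℕ) :
    ∑ j ∈ Finset.Icc 1 n, (((n+1).choose j : ℕ) : ℝ) * p ^ j * (1-p) ^ (n+1-j)
      = 1 - p ^ (n+1) - (1-p) ^ (n+1) := by
  have h := add_pow p (1-p) (n+1)
  rw [show p + (1-p) = (1:ℝ) by ring, one_pow] at h
  rw [Finset.sum_range_succ, Finset.sum_range_succ'] at h
  simp only [pow_zero, Nat.choose_self, Nat.cast_one, mul_one, one_mul,
    Nat.sub_self, Nat.choose_zero_right, Nat.sub_zero] at h
  rw [← Finset.Ico_add_one_right_eq_Icc, Finset.sum_Ico_eq_sum_range]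
  simp only [Nat.add_sub_cancel, Nat.succ_sub_one]
  have e : ∀ i ∈ Finset.range n, (((n+1).choose (1+i) : ℕ) : ℝ) * p ^ (1+i) * (1-p) ^ (n+1-(1+i))
      = p ^ (i+1) * (1-p) ^ (n+1-(i+1)) * (((n+1).choose (i+1) : ℕ) : ℝ) := by
    intro i _
    rw [add_comm 1 i]
    ring
  rw [Finset.sum_congr rfl e]
  linarith [h]

lemma v_rec' (p : ℝ) (n : ℕ)
    (H : ∀ m, 2 ≤ m → m ≤ n → v p (m-1) + 1 ≤ v p m) :
    v p (n+1) = v p n + 1 + p ^ (n+1) * ((n:ℝ) - v p n) - (1-p) ^ (n+1) := by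
  have hsup : ∀ (j : {x // x ∈ Finset.Icc 1 n}),
      ((Finset.Icc 1 j.1).attach.sup'
        (Finset.attach_nonempty_iff.mpr
          (Finset.nonempty_Icc.mpr (Finset.mem_Icc.mp j.2).1))
        (fun i => v p (n + 1 - i.1) + (i.1 : ℝ))) = v p n + 1 := by
    intro j
    have hj := Finset.mem_Icc.mp j.2
    apply le_antisymm
    · apply Finset.sup'_le
      intro i _
      have hi := Finset.mem_Icc.mp i.2
      have hi1 : 1 ≤ i.1 := hi.1
      have hin : i.1 ≤ n := le_trans hi.2 hj.2
      have hch := v_chain' p n H (i.1 - 1) (n + 1 - i.1) (by omega) (by omega)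
      have e : n + 1 - i.1 + (i.1 - 1) = n := by omega
      rw [e] at hch
      have ec : ((i.1 - 1 : ℕ) : ℝ) = (i.1 : ℝ) - 1 := by
        push_cast [hi1]
        ring
      rw [ec] at hch
      linarith
    · have h1m : (1 : ℕ) ∈ Finset.Icc 1 j.1 := Finset.mem_Icc.mpr ⟨le_refl 1, hj.1⟩
      have := Finset.le_sup'
        (fun i : {x // x ∈ Finset.Icc 1 j.1} => v p (n + 1 - i.1) + (i.1 : ℝ))
        (Finset.mem_attach _ (⟨1, h1m⟩ : {x // x ∈ Finset.Icc 1 j.1}))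
      convert this using 1
      simp
  rw [v]
  rw [Finset.sum_congr rfl (fun j _ => by rw [hsup j])]
  rw [show (∑ j ∈ (Finset.Icc 1 n).attach,
      (((n + 1).choose j.1 : ℕ) : ℝ) * p ^ (j.1 : ℕ) * (1 - p) ^ (n + 1 - j.1) * (v p n + 1))
      = (∑ j ∈ (Finset.Icc 1 n).attach,
      (((n + 1).choose j.1 : ℕ) : ℝ) * p ^ (j.1 : ℕ) * (1 - p) ^ (n + 1 - j.1)) * (v p n + 1)
      from (Finset.sum_mul _ _ _).symm]
  rw [Finset.sum_attach (Finset.Icc 1 n)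
      (fun j => (((n + 1).choose j : ℕ) : ℝ) * p ^ j * (1 - p) ^ (n + 1 - j))]
  rw [v_sum_binom']
  ring

theorem coin_game_bounds_for_phi (p : ℝ) (hp1 : (Real.sqrt 5 - 1) / 2 ≤ p) (hp2 : p < 1)
    (n : ℕ) (hn : 2 ≤ n) :
    v p (n - 1) + 1 ≤ v p n ∧ v p n < (n : ℝ) - ((1 - p) / p) ^ (n + 1) ∧
      (¬(n = 2 ∧ p = (Real.sqrt 5 - 1) / 2) → v p (n - 1) + 1 < v p n) := by
  have h5 : Real.sqrt 5 ^ 2 = 5 := Real.sq_sqrt (by norm_num)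
  have h5' : 0 ≤ Real.sqrt 5 := Real.sqrt_nonneg 5
  have hp06 : (3:ℝ)/5 ≤ p := by nlinarith
  have hp0 : 0 < p := by linarith
  have hq0 : 0 < 1 - p := by linarith
  have hc : 0 ≤ p^2 + p - 1 := by nlinarith
  set r := (1-p)/p with hr
  have hr0 : 0 < r := div_pos hq0 hp0
  have hr1 : r < 1 := (div_lt_one hp0).mpr (by linarith)
  have hqr : ∀ k : ℕ, (1-p) ^ k = r ^ k * p ^ k := by
    intro k
    rw [hr, div_pow]
    field_simp
  have base : r ^ 2 ≤ 1 - v p 1 := by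
    rw [v_one', hr, div_pow, div_le_iff₀ (by positivity)]
    nlinarith
  have key : ∀ n, 1 ≤ n →
      (∀ m, 2 ≤ m → m ≤ n → v p (m-1) + 1 ≤ v p m) ∧
      r ^ (n+1) ≤ (n:ℝ) - v p n ∧ (2 ≤ n → r ^ (n+1) < (n:ℝ) - v p n) := by
    intro n hn
    induction n with
    | zero => omega
    | succ n ih =>
      rcases Nat.lt_or_ge n 1 with h1 | h1
      · interval_cases n
        refine ⟨by omega, by simpa using base, by omega⟩
      · obtain ⟨B, A, _⟩ := ih h1
        have vrec := v_rec' p n B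
        have hpp : 0 < p ^ (n+1) := by positivity
        have hrp : 0 < r ^ (n+1) := by positivity
        have hmul : r ^ (n+1) * p ^ (n+1) ≤ ((n:ℝ) - v p n) * p ^ (n+1) :=
          mul_le_mul_of_nonneg_right A hpp.le
        have incr : v p n + 1 ≤ v p (n+1) := by
          rw [vrec, hqr (n+1)]
          nlinarith
        have hple : p ^ (n+1) ≤ 1 := pow_le_one₀ hp0.le hp2.le
        have h2 : ((n:ℝ)+1) - v p (n+1)
            = ((n:ℝ) - v p n) * (1 - p ^ (n+1)) + r ^ (n+1) * p ^ (n+1) := by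
          rw [vrec, ← hqr (n+1)]; ring
        have h3 : r ^ (n+1) * (1 - p ^ (n+1)) ≤ ((n:ℝ) - v p n) * (1 - p ^ (n+1)) :=
          mul_le_mul_of_nonneg_right A (by linarith)
        have h4 : r ^ (n+2) < r ^ (n+1) := by
          rw [pow_succ]
          nlinarith
        refine ⟨?_, ?_, fun _ => ?_⟩
        · intro m hm hmn
          rcases Nat.lt_or_ge m (n+1) with h | h
          · exact B m hm (by omega)
          · have hme : m = n + 1 := by omega
            subst hme
            simpa using incr
        · push_cast
          rw [show n + 1 + 1 = n + 2 from rfl]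
          linarith
        · push_cast
          rw [show n + 1 + 1 = n + 2 from rfl]
          linarith
  obtain ⟨B, A, As⟩ := key n (by omega)
  have hm1 : n - 1 + 1 = n := by omega
  refine ⟨B n hn (le_refl n), by linarith [As hn], ?_⟩
  intro hne
  rcases Nat.lt_or_ge n 3 with h3 | h3
  · -- n = 2
    have hn2 : n = 2 := by omega
    subst hn2
    have hpφ : (Real.sqrt 5 - 1) / 2 < p := by
      rcases lt_or_eq_of_le hp1 with h | h
      · exact h
      · exact absurd ⟨rfl, h.symm⟩ hne
    have hcs : 0 < p^2 + p - 1 := by nlinarith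
    have bases : r ^ 2 < 1 - v p 1 := by
      rw [v_one', hr, div_pow, div_lt_iff₀ (by positivity)]
      nlinarith
    have vrec2 := v_rec' p 1 (by omega)
    norm_num at vrec2
    have hpp : 0 < p ^ 2 := by positivity
    have hb := mul_lt_mul_of_pos_right bases hpp
    rw [← hqr 2] at hb
    show v p 1 + 1 < v p 2
    rw [vrec2]
    nlinarith
  · -- n ≥ 3
    obtain ⟨B', A', As'⟩ := key (n-1) (by omega)
    have vrec := v_rec' p (n-1) B'
    rw [hm1] at vrec
    have hstrict := As' (by omega)
    rw [hm1] at hstrict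
    have hpp : 0 < p ^ n := by positivity
    have hmul := mul_lt_mul_of_pos_right hstrict hpp
    rw [← hqr n] at hmul
    rw [vrec]
    linarith
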